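/- Fix b ≥ 2 and N ≥ 1. Any sequence m_0 < m_0 + k_1 < m_0 + k_1 + k_2 < ... of Fibonacci indices, in which each consecutive pair (m, m') satisfies F_{m'} = b^t · F_m + r for some 1 ≤ t ≤ N and 0 ≤ r < b^t (with m_0 ≥ 1), has length at most 2N·log_φ b + log_φ 2 + 4, where φ = (1+√5)/2. In particular, every at-most-N-digit-appending walk along the Fibonacci numbers in base b is finite. -/

import Mathlib

open Real

local notation "gr" => goldenRatio
local notation "gc" => goldenConj

lemma sqrt5_sq : Real.sqrt 5 ^ 2 = 5 := Real.sq_sqrt (by norm_num)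

lemma sqrt5_lb : (2.236 : ℝ) ≤ Real.sqrt 5 := by
  nlinarith [sqrt5_sq, Real.sqrt_nonneg 5]

lemma sqrt5_ub : Real.sqrt 5 ≤ (2.2361 : ℝ) := by
  nlinarith [sqrt5_sq, Real.sqrt_nonneg 5]

lemma gr_lb : (1.618 : ℝ) ≤ gr := by
  have := sqrt5_lb; rw [goldenRatio]; linarith

lemma gr_ub : gr ≤ (1.619 : ℝ) := by
  have := sqrt5_ub; rw [goldenRatio]; linarith

lemma gc_eq : gc = (1 - Real.sqrt 5) / 2 := rfl

-- the Lucas-number identity: φ^k + ψ^k = F_{k+1} + F_{k-1}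
lemma lucas_eq (j : ℕ) :
    ((Nat.fib (j + 2) + Nat.fib j : ℕ) : ℝ) = gr ^ (j + 1) + gc ^ (j + 1) := by
  have h1 : Real.sqrt 5 * (Nat.fib (j + 2) : ℝ) = gr ^ (j + 2) - gc ^ (j + 2) := by
    rw [Real.coe_fib_eq]; field_simp
  have h2 : Real.sqrt 5 * (Nat.fib j : ℝ) = gr ^ j - gc ^ j := by
    rw [Real.coe_fib_eq]; field_simp
  have hφ : gr ^ 2 + 1 = Real.sqrt 5 * gr := by
    rw [goldenRatio]; nlinarith [sqrt5_sq]
  have hψ : gc ^ 2 + 1 = -(Real.sqrt 5) * gc := by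
    rw [gc_eq]; nlinarith [sqrt5_sq]
  have h5 : (0:ℝ) < Real.sqrt 5 := by nlinarith [sqrt5_lb]
  have key : Real.sqrt 5 * ((Nat.fib (j + 2) + Nat.fib j : ℕ) : ℝ)
      = Real.sqrt 5 * (gr ^ (j + 1) + gc ^ (j + 1)) := by
    push_cast
    have : Real.sqrt 5 * ((Nat.fib (j + 2) : ℝ) + (Nat.fib j : ℝ))
        = gr ^ j * (gr ^ 2 + 1) - gc ^ j * (gc ^ 2 + 1) := by
      rw [mul_add, h1, h2]; ring
    rw [this, hφ, hψ]; ring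
  exact mul_left_cancel₀ (ne_of_gt h5) key

-- distance of gr^k to any natural number
lemma gr_pow_dist (k : ℕ) (hk : 1 ≤ k) (n : ℕ) :
    1 ≤ gr ^ (k + 1) * |gr ^ k - (n : ℝ)| := by
  obtain ⟨j, rfl⟩ := Nat.exists_eq_add_of_le hk
  set k := 1 + j with hkdef
  have hkj : k = j + 1 := by omega
  have hgc : gr * (-gc) = 1 := by
    have := goldenRatio_mul_goldenConj; linarith [goldenRatio_mul_goldenConj]
  have hgcpos : (0:ℝ) < -gc := by
    have := goldenConj_neg; linarith
  have habs : |gc ^ k| = (-gc) ^ k := by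
    rw [abs_pow, abs_of_neg goldenConj_neg]
  have hprod : gr ^ k * (-gc) ^ k = 1 := by
    rw [← mul_pow, hgc, one_pow]
  have hgrpos : (0:ℝ) < gr := goldenRatio_pos
  have hc : ((Nat.fib (j + 2) + Nat.fib j : ℕ) : ℝ) = gr ^ k + gc ^ k := by
    rw [hkj]; exact lucas_eq j
  set c : ℕ := Nat.fib (j + 2) + Nat.fib j with hcdef
  by_cases hcn : c = n
  · have : gr ^ k - (n : ℝ) = -(gc ^ k) := by
      rw [← hcn, hc] at *; linarith [hc]
    rw [this, abs_neg, habs]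
    have : gr ^ (k+1) * (-gc) ^ k = gr := by
      rw [pow_succ]
      calc gr ^ k * gr * (-gc) ^ k = (gr ^ k * (-gc) ^ k) * gr := by ring
        _ = gr := by rw [hprod, one_mul]
    rw [this]; linarith [one_lt_goldenRatio]
  · -- |c - n| ≥ 1
    have hint : (1:ℝ) ≤ |(c:ℝ) - (n:ℝ)| := by
      have hne : ((c:ℤ) - (n:ℤ)) ≠ 0 := sub_ne_zero.mpr (by exact_mod_cast hcn)
      have h1 : (1:ℤ) ≤ |(c:ℤ) - (n:ℤ)| := Int.one_le_abs hne
      exact_mod_cast h1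
    have hd : gr ^ k - (n:ℝ) = ((c:ℝ) - n) - gc ^ k := by
      rw [hc]; ring
    have habs2 : |gc ^ k| ≤ (-gc) ^ k := le_of_eq habs
    have h2 : 1 - (-gc) ^ k ≤ |gr ^ k - (n:ℝ)| := by
      rw [hd]
      have := abs_sub_abs_le_abs_sub ((c:ℝ) - n) (gc ^ k)
      have h3 : |(c:ℝ) - n| - |gc ^ k| ≤ |(c:ℝ) - n - gc ^ k| := this
      linarith
    -- gr^{k+1} * (1 - (-gc)^k) = gr^{k+1} - gr ≥ 1  since gr^{k+1} ≥ gr^2 = gr + 1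
    have hge : gr ^ 2 ≤ gr ^ (k + 1) := by
      apply pow_le_pow_right₀ (le_of_lt one_lt_goldenRatio); omega
    have hmul : gr ^ (k + 1) * (1 - (-gc) ^ k) = gr ^ (k + 1) - gr := by
      have : gr ^ (k + 1) * (-gc) ^ k = gr := by
        rw [pow_succ]
        calc gr ^ k * gr * (-gc) ^ k = (gr ^ k * (-gc) ^ k) * gr := by ring
          _ = gr := by rw [hprod, one_mul]
      rw [mul_sub, mul_one, this]
    have hpos : (0:ℝ) ≤ gr ^ (k+1) := le_of_lt (pow_pos hgrpos _)
    calc (1:ℝ) ≤ gr ^ (k+1) - gr := by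
          have := goldenRatio_sq; nlinarith
      _ = gr ^ (k + 1) * (1 - (-gc) ^ k) := hmul.symm
      _ ≤ gr ^ (k + 1) * |gr ^ k - (n:ℝ)| := by
          apply mul_le_mul_of_nonneg_left h2 hpos


set_option maxHeartbeats 1000000 in
lemma key_bound (b t m k r : ℕ) (hb : 2 ≤ b) (ht : 1 ≤ t) (hm : 1 ≤ m) (hk : 1 ≤ k)
    (hr : r < b ^ t) (heq : Nat.fib (m + k) = b ^ t * Nat.fib m + r) :
    gr ^ m ≤ 2 * gr ^ 4 * ((b : ℝ) ^ t) ^ 2 := by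
  set B : ℝ := (b : ℝ) ^ t with hBdef
  have hB2 : (2 : ℝ) ≤ B := by
    calc (2:ℝ) = 2 ^ 1 := by norm_num
      _ ≤ 2 ^ t := pow_le_pow_right₀ one_le_two ht
      _ ≤ (b:ℝ) ^ t := by
          apply pow_le_pow_left₀ (by norm_num) (by exact_mod_cast hb)
  have hBpos : (0:ℝ) < B := by linarith
  have hFcast : (Nat.fib (m + k) : ℝ) = B * Nat.fib m + r := by
    rw [hBdef]; exact_mod_cast heq
  have h1mk : Real.sqrt 5 * (Nat.fib (m + k) : ℝ) = gr ^ (m + k) - gc ^ (m + k) := by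
    rw [Real.coe_fib_eq]; field_simp
  have h1m : Real.sqrt 5 * (Nat.fib m : ℝ) = gr ^ m - gc ^ m := by
    rw [Real.coe_fib_eq]; field_simp
  have E : gr ^ m * (gr ^ k - B) = Real.sqrt 5 * r + gc ^ m * (gc ^ k - B) := by
    linear_combination (-1 : ℝ) * h1mk + B * h1m + Real.sqrt 5 * hFcast
  have hgneg := goldenConj_neg
  have hgm1 : (-1:ℝ) < gc := neg_one_lt_goldenConj
  have habs : ∀ j : ℕ, 1 ≤ j → |gc ^ j| ≤ -gc := by
    intro j hj
    rw [abs_pow, abs_of_neg hgneg]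
    calc (-gc) ^ j ≤ (-gc) ^ 1 := by
          apply pow_le_pow_of_le_one (by linarith) (by linarith) hj
      _ = -gc := pow_one _
  have habm := habs m hm
  have habk := habs k hk
  have hr' : (r : ℝ) ≤ B - 1 := by
    have : (r : ℝ) + 1 ≤ (b:ℝ) ^ t := by exact_mod_cast hr
    linarith
  have hrnn : (0:ℝ) ≤ (r:ℝ) := Nat.cast_nonneg r
  have h5nn : (0:ℝ) ≤ Real.sqrt 5 := Real.sqrt_nonneg 5
  have hERHSabs : |Real.sqrt 5 * r + gc ^ m * (gc ^ k - B)| ≤ (3 * gr - 2) * B := by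
    have ha := abs_add_le (Real.sqrt 5 * r) (gc ^ m * (gc ^ k - B))
    have hb1 : |Real.sqrt 5 * (r:ℝ)| = Real.sqrt 5 * r :=
      abs_of_nonneg (mul_nonneg h5nn hrnn)
    have hb2 : |gc ^ m * (gc ^ k - B)| = |gc ^ m| * |gc ^ k - B| := abs_mul _ _
    have hb3 : |gc ^ k - B| ≤ |gc ^ k| + |B| := abs_sub _ _
    have hb4 : |gc ^ m| * |gc ^ k - B| ≤ (-gc) * ((-gc) + B) := by
      apply mul_le_mul habm _ (abs_nonneg _) (by linarith)
      rw [abs_of_pos hBpos] at hb3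
      linarith
    have hgr : gr = (1 + Real.sqrt 5) / 2 := rfl
    have hgc2 : gc = (1 - Real.sqrt 5) / 2 := rfl
    nlinarith [sqrt5_sq, sqrt5_lb, hB2]
  have hgrpos := goldenRatio_pos
  have hgr1 := one_lt_goldenRatio
  have hPm : gr ^ 1 ≤ gr ^ m := pow_le_pow_right₀ (le_of_lt hgr1) hm
  have hKbound : gr ^ k ≤ (9/2 - gr) * B := by
    by_cases hKB : gr ^ k ≤ B
    · nlinarith [gr_ub, hB2]
    · push_neg at hKB
      have h1 : gr * (gr ^ k - B) ≤ gr ^ m * (gr ^ k - B) := by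
        apply mul_le_mul_of_nonneg_right _ (by linarith)
        calc gr = gr ^ 1 := (pow_one _).symm
          _ ≤ gr ^ m := hPm
      have h2 : gr ^ m * (gr ^ k - B) ≤ (3 * gr - 2) * B := by
        calc gr ^ m * (gr ^ k - B) ≤ |Real.sqrt 5 * r + gc ^ m * (gc ^ k - B)| := by
              rw [← E]; exact le_abs_self _
          _ ≤ (3 * gr - 2) * B := hERHSabs
      have h12 : gr * (gr ^ k - B) ≤ (3 * gr - 2) * B := le_trans h1 h2
      have hg2 : (0:ℝ) ≤ 2 - gr := by nlinarith [gr_ub]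
      have h3 : gr * gr ^ k ≤ gr * ((9/2 - gr) * B) := by
        nlinarith [h12, goldenRatio_sq, mul_nonneg hg2 (le_of_lt hBpos)]
      exact le_of_mul_le_mul_left h3 hgrpos
  have hdist : 1 ≤ gr ^ (k + 1) * |gr ^ k - B| := by
    have := gr_pow_dist k hk (b ^ t)
    have hcast : ((b ^ t : ℕ) : ℝ) = B := by rw [hBdef]; push_cast; ring
    rwa [hcast] at this
  have hPabs : gr ^ m * |gr ^ k - B| ≤ (3 * gr - 2) * B := by
    have : gr ^ m * |gr ^ k - B| = |gr ^ m * (gr ^ k - B)| := by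
      rw [abs_mul, abs_of_pos (pow_pos hgrpos m)]
    rw [this, E]; exact hERHSabs
  have hKpos : (0:ℝ) < gr ^ k := pow_pos hgrpos k
  have chain : gr ^ m ≤ (gr * (3 * gr - 2)) * (gr ^ k * B) := by
    calc gr ^ m = gr ^ m * 1 := (mul_one _).symm
      _ ≤ gr ^ m * (gr ^ (k + 1) * |gr ^ k - B|) := by
          apply mul_le_mul_of_nonneg_left hdist (le_of_lt (pow_pos hgrpos m))
      _ = gr ^ (k + 1) * (gr ^ m * |gr ^ k - B|) := by ring
      _ ≤ gr ^ (k + 1) * ((3 * gr - 2) * B) := by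
          apply mul_le_mul_of_nonneg_left hPabs (le_of_lt (pow_pos hgrpos _))
      _ = (gr * (3 * gr - 2)) * (gr ^ k * B) := by rw [pow_succ]; ring
  have hcoefnn : (0:ℝ) ≤ gr * (3 * gr - 2) := by nlinarith [gr_lb]
  have chain2 : (gr * (3 * gr - 2)) * (gr ^ k * B) ≤ (gr * (3 * gr - 2)) * ((9/2 - gr) * B * B) := by
    apply mul_le_mul_of_nonneg_left _ hcoefnn
    calc gr ^ k * B ≤ ((9/2 - gr) * B) * B :=
          mul_le_mul_of_nonneg_right hKbound (le_of_lt hBpos)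
      _ = (9/2 - gr) * B * B := by ring
  have hcoef : gr * (3 * gr - 2) * (9/2 - gr) ≤ 2 * gr ^ 4 := by
    nlinarith [goldenRatio_sq, gr_lb, gr_ub]
  have hfin : (gr * (3 * gr - 2)) * ((9/2 - gr) * B * B) ≤ 2 * gr ^ 4 * B ^ 2 := by
    have hBB : (0:ℝ) ≤ B * B := mul_nonneg (le_of_lt hBpos) (le_of_lt hBpos)
    nlinarith [mul_le_mul_of_nonneg_right hcoef hBB]
  calc gr ^ m ≤ (gr * (3 * gr - 2)) * (gr ^ k * B) := chain
    _ ≤ (gr * (3 * gr - 2)) * ((9/2 - gr) * B * B) := chain2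
    _ ≤ 2 * gr ^ 4 * B ^ 2 := hfin

theorem fib_walk_length_bound (b N : ℕ) (hb : 2 ≤ b) (hN : 1 ≤ N)
    (L : ℕ) (idx : ℕ → ℕ) (h0 : 1 ≤ idx 0)
    (hmono : ∀ j < L, idx j < idx (j + 1))
    (hstep : ∀ j < L, ∃ t r : ℕ, 1 ≤ t ∧ t ≤ N ∧ r < b ^ t ∧
      Nat.fib (idx (j + 1)) = b ^ t * Nat.fib (idx j) + r) :
    (L : ℝ) ≤ 2 * N * Real.logb ((1 + Real.sqrt 5) / 2) b
      + Real.logb ((1 + Real.sqrt 5) / 2) 2 + 4 := by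
  have hgr : ((1 + Real.sqrt 5) / 2 : ℝ) = gr := rfl
  rw [hgr]
  have hgr1 : (1:ℝ) < gr := one_lt_goldenRatio
  have hlogb : (0:ℝ) ≤ Real.logb gr b := Real.logb_nonneg hgr1 (by exact_mod_cast Nat.one_le_iff_ne_zero.mpr (by omega))
  have hlog2 : (0:ℝ) ≤ Real.logb gr 2 := Real.logb_nonneg hgr1 (by norm_num)
  rcases Nat.eq_zero_or_pos L with hL0 | hLpos
  · subst hL0
    have : (0:ℝ) ≤ 2 * N * Real.logb gr b :=
      mul_nonneg (by positivity) hlogb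
    push_cast
    linarith
  · obtain ⟨t, r, ht1, htN, hrlt, heq⟩ := hstep (L - 1) (by omega)
    have hidx : ∀ j, j ≤ L → j + 1 ≤ idx j := by
      intro j
      induction j with
      | zero => intro _; exact h0
      | succ n ih =>
        intro hn
        have h1 := hmono n (by omega)
        have h2 := ih (by omega)
        omega
    have hmm' : idx (L - 1) < idx (L - 1 + 1) := hmono (L - 1) (by omega)
    set m := idx (L - 1) with hmdef
    set k := idx (L - 1 + 1) - m with hkdef
    have hk1 : 1 ≤ k := by omega
    have hmk : m + k = idx (L - 1 + 1) := by omega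
    have hm1 : 1 ≤ m := by have := hidx (L - 1) (by omega); omega
    have hLm : L ≤ m := by have := hidx (L - 1) (by omega); omega
    rw [← hmk] at heq
    have hmain := key_bound b t m k r hb ht1 hm1 hk1 hrlt heq
    have hb1 : (1:ℝ) ≤ (b:ℝ) := by exact_mod_cast Nat.one_le_iff_ne_zero.mpr (by omega)
    have hbt : ((b:ℝ) ^ t) ^ 2 ≤ (b:ℝ) ^ (2 * N) := by
      rw [← pow_mul]
      apply pow_le_pow_right₀ hb1
      omega
    have hgr4 : (0:ℝ) < 2 * gr ^ 4 := by positivity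
    have hfinal : gr ^ L ≤ 2 * gr ^ 4 * (b:ℝ) ^ (2 * N) := by
      calc gr ^ L ≤ gr ^ m := pow_le_pow_right₀ (le_of_lt hgr1) hLm
        _ ≤ 2 * gr ^ 4 * ((b:ℝ) ^ t) ^ 2 := hmain
        _ ≤ 2 * gr ^ 4 * (b:ℝ) ^ (2 * N) :=
            mul_le_mul_of_nonneg_left hbt (le_of_lt hgr4)
    have hLpos' : (0:ℝ) < gr ^ L := pow_pos goldenRatio_pos L
    have hlogle := Real.logb_le_logb_of_le hgr1 hLpos' hfinal
    have hbpos : (0:ℝ) < (b:ℝ) := by linarith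
    have hsplit : Real.logb gr (2 * gr ^ 4 * (b:ℝ) ^ (2 * N))
        = Real.logb gr 2 + 4 + (2 * N) * Real.logb gr b := by
      rw [Real.logb_mul (by positivity) (by positivity),
          Real.logb_mul (by positivity) (by positivity),
          Real.logb_pow, Real.logb_pow, Real.logb_self_eq_one hgr1]
      push_cast
      ring
    have hL' : Real.logb gr (gr ^ L) = L := by
      rw [Real.logb_pow, Real.logb_self_eq_one hgr1, mul_one]
    rw [hL', hsplit] at hlogle
    linarith
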